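/- Let Γ be a closed additive subgroup of the m-dimensional torus 𝕋^m = (Fin m → AddCircle (1:ℝ)), regarded as a topological (metric) space with the subspace topology. Then the set of elements θ ∈ Γ that are exponentially Liouville — i.e. such that for every real c > 0 there exists a positive integer k with dist(k • θ, 0) < exp(−c·k) — is residual in Γ. -/

import Mathlib

open Submodule Module Set Filter

namespace ExpLiouvilleAux

/-- The set of integer vectors, as a `ℤ`-submodule of `Fin m → ℝ`. -/
def intVec (m : ℕ) : Submodule ℤ (Fin m → ℝ) where
  carrier := {x | ∀ i, ∃ z : ℤ, x i = z}
  add_mem' := by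
    rintro a b ha hb i
    obtain ⟨za, hza⟩ := ha i; obtain ⟨zb, hzb⟩ := hb i
    exact ⟨za + zb, by simp [hza, hzb]⟩
  zero_mem' := fun i => ⟨0, by simp⟩
  smul_mem' := by
    rintro n x hx i
    obtain ⟨z, hz⟩ := hx i
    exact ⟨n * z, by simp [Pi.smul_apply, hz, zsmul_eq_mul]⟩

/-- If a sequence of nonzero elements of a closed subgroup tends to `0`, the subgroup
contains a line; moreover the direction is a limit of normalized elements. -/
theorem line_of_tendsto_zero {F : Type*} [NormedAddCommGroup F] [NormedSpace ℝ F]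
    [ProperSpace F] (L : AddSubgroup F) (hLc : IsClosed (L : Set F))
    {y : ℕ → F} (hyL : ∀ n, y n ∈ L) (hy0 : ∀ n, y n ≠ 0)
    (hlim : Tendsto y atTop (nhds 0)) :
    ∃ u : F, ‖u‖ = 1 ∧ (∀ t : ℝ, t • u ∈ L) ∧
      u ∈ closure (Set.range fun n => ‖y n‖⁻¹ • y n) := by
  set v : ℕ → F := fun n => ‖y n‖⁻¹ • y n with hv
  have hvs : ∀ n, v n ∈ Metric.sphere (0 : F) 1 := by
    intro n
    simp only [Metric.mem_sphere, dist_zero_right, hv, norm_smul, norm_inv, norm_norm]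
    rw [inv_mul_cancel₀ (norm_ne_zero_iff.2 (hy0 n))]
  obtain ⟨u, hus, φ, hφ, hφlim⟩ := (isCompact_sphere (0 : F) 1).tendsto_subseq hvs
  have hnorm_u : ‖u‖ = 1 := by simpa [dist_zero_right] using hus
  have hylim : Tendsto (fun n => ‖y (φ n)‖) atTop (nhds 0) := by
    have := (hlim.comp hφ.tendsto_atTop).norm
    simpa using this
  refine ⟨u, hnorm_u, ?_, ?_⟩
  · intro t
    set k : ℕ → ℤ := fun n => ⌊t / ‖y (φ n)‖⌋ with hk
    have hkL : ∀ n, (k n) • y (φ n) ∈ L := fun n => AddSubgroup.zsmul_mem L (hyL _) _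
    have hc : Tendsto (fun n => (k n : ℝ) * ‖y (φ n)‖) atTop (nhds t) := by
      have hbound : ∀ n, ‖(k n : ℝ) * ‖y (φ n)‖ - t‖ ≤ ‖y (φ n)‖ := by
        intro n
        have hpos : (0:ℝ) < ‖y (φ n)‖ := norm_pos_iff.2 (hy0 _)
        have h1 : |(⌊t / ‖y (φ n)‖⌋ : ℝ) - t / ‖y (φ n)‖| ≤ 1 := by
          rw [abs_sub_comm, abs_of_nonneg (by simpa using (Int.floor_le (t / ‖y (φ n)‖)))]
          have := (Int.fract_lt_one (t / ‖y (φ n)‖)).le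
          rw [Int.fract] at this
          linarith
        have : |(k n : ℝ) * ‖y (φ n)‖ - t| =
            |(⌊t / ‖y (φ n)‖⌋ : ℝ) - t / ‖y (φ n)‖| * ‖y (φ n)‖ := by
          rw [← abs_of_pos hpos, ← abs_mul]
          congr 1
          rw [abs_of_pos hpos, sub_mul, div_mul_cancel₀ t hpos.ne', hk]
        rw [Real.norm_eq_abs, this]
        calc |(⌊t / ‖y (φ n)‖⌋ : ℝ) - t / ‖y (φ n)‖| * ‖y (φ n)‖
            ≤ 1 * ‖y (φ n)‖ := by
              apply mul_le_mul_of_nonneg_right h1 (norm_nonneg _)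
          _ = ‖y (φ n)‖ := one_mul _
      have h0 : Tendsto (fun n => (k n : ℝ) * ‖y (φ n)‖ - t) atTop (nhds 0) :=
        squeeze_zero_norm hbound hylim
      have := h0.add_const t
      simpa using this
    have hsm : Tendsto (fun n => ((k n : ℝ) * ‖y (φ n)‖) • v (φ n)) atTop (nhds (t • u)) :=
      hc.smul hφlim
    have heq : ∀ n, ((k n : ℝ) * ‖y (φ n)‖) • v (φ n) = (k n) • y (φ n) := by
      intro n
      have hne : ‖y (φ n)‖ ≠ 0 := norm_ne_zero_iff.2 (hy0 _)
      rw [hv]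
      rw [smul_smul, mul_assoc, mul_inv_cancel₀ hne, mul_one, ← Int.cast_smul_eq_zsmul ℝ]
    rw [show (t • u) = t • u from rfl]
    refine hLc.mem_of_tendsto (by simpa only [heq] using hsm) ?_
    exact Filter.Eventually.of_forall fun n => hkL n
  · exact mem_closure_of_tendsto hφlim
      (Filter.Eventually.of_forall fun n => ⟨φ n, rfl⟩)

variable {m : ℕ}

set_option maxHeartbeats 2000000 in
theorem rat_dense (L : AddSubgroup (Fin m → ℝ)) (hLc : IsClosed (L : Set (Fin m → ℝ)))
    (hLi : ∀ x ∈ intVec m, x ∈ L) :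
    ∀ x ∈ L, ∀ ε : ℝ, 0 < ε → ∃ y ∈ L, (∀ i, ∃ q : ℚ, y i = q) ∧ ‖y - x‖ < ε := by
  classical
  -- V : the subspace of directions fully contained in L
  set V : Submodule ℝ (Fin m → ℝ) :=
    { carrier := {x | ∀ t : ℝ, t • x ∈ L}
      add_mem' := fun {a b} ha hb t => by simpa [smul_add] using L.add_mem (ha t) (hb t)
      zero_mem' := fun t => by simpa using L.zero_mem
      smul_mem' := fun c x hx t => by simpa [smul_smul] using hx (t * c) } with hVdef
  have hVmem : ∀ x, x ∈ V ↔ ∀ t : ℝ, t • x ∈ L := fun x => Iff.rfl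
  have hVL : ∀ v ∈ V, v ∈ L := fun v hv => by simpa using (hv 1)
  obtain ⟨Q, hQ⟩ := Submodule.exists_isCompl V
  set P : (Fin m → ℝ) →ₗ[ℝ] (Fin m → ℝ) := V.subtype.comp (V.projectionOnto Q hQ) with hPdef
  have hPmemV : ∀ x, P x ∈ V := fun x => (V.projectionOnto Q hQ x).2
  have hPfix : ∀ v ∈ V, P v = v := fun v hv => by
    simp [hPdef, Submodule.projectionOnto_apply_left hQ ⟨v, hv⟩]
  have hPcont : Continuous P := P.continuous_of_finiteDimensional
  have hkerV : ∀ x ∈ LinearMap.ker P, x ∈ V → x = 0 := by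
    intro x hk hV
    have := hPfix x hV
    rw [LinearMap.mem_ker.1 hk] at this
    exact this.symm
  -- Step A : small elements of L lie in V
  have stepA : ∃ ε₀ > 0, ∀ x ∈ L, ‖x‖ < ε₀ → x ∈ V := by
    by_contra h
    push_neg at h
    have hex : ∀ n : ℕ, ∃ x, x ∈ L ∧ ‖x‖ < 1 / (n + 1) ∧ x ∉ V := by
      intro n
      obtain ⟨x, hx1, hx2, hx3⟩ := h (1 / (n + 1)) (by positivity)
      exact ⟨x, hx1, hx2, hx3⟩
    choose x hxL hxn hxV using hex
    have hxlim : Tendsto x atTop (nhds 0) := by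
      apply squeeze_zero_norm (fun n => (hxn n).le)
      exact tendsto_one_div_add_atTop_nhds_zero_nat
    set y : ℕ → (Fin m → ℝ) := fun n => x n - P (x n) with hy
    have hyL : ∀ n, y n ∈ L := fun n => L.sub_mem (hxL n) (hVL _ (hPmemV (x n)))
    have hy0 : ∀ n, y n ≠ 0 := by
      intro n h0
      apply hxV n
      have : x n = P (x n) := by rwa [hy, sub_eq_zero] at h0
      rw [this]; exact hPmemV _
    have hyker : ∀ n, y n ∈ LinearMap.ker P := by
      intro n
      simp [hy, LinearMap.mem_ker, map_sub, hPfix _ (hPmemV (x n)), sub_self]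
    have hylim : Tendsto y atTop (nhds 0) := by
      have : Tendsto (fun n => x n - P (x n)) atTop (nhds (0 - P 0)) :=
        (hxlim.sub ((hPcont.tendsto 0).comp hxlim))
      simpa using this
    obtain ⟨u, hu1, huL, hucl⟩ := ExpLiouvilleAux.line_of_tendsto_zero L hLc hyL hy0 hylim
    have huker : u ∈ LinearMap.ker P := by
      have hclosed : IsClosed (LinearMap.ker P : Set (Fin m → ℝ)) :=
        (LinearMap.ker P).closed_of_finiteDimensional
      refine hclosed.closure_subset_iff.2 ?_ hucl
      rintro _ ⟨n, rfl⟩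
      exact Submodule.smul_mem _ _ (hyker n)
    have huV : u ∈ V := fun t => huL t
    have := hkerV u huker huV
    rw [this] at hu1; simp at hu1
  -- Step B : the lattice Λ inside F := ker P
  obtain ⟨ε₀, hε₀, hsmall⟩ := stepA
  have hψ0 : ∀ x, (LinearMap.id (R := ℝ) (M := Fin m → ℝ) - P) x ∈ LinearMap.ker P := by
    intro x
    simp [LinearMap.mem_ker, map_sub, hPfix _ (hPmemV x), sub_self]
  set ψ : (Fin m → ℝ) →ₗ[ℝ] ↥(LinearMap.ker P) :=
    LinearMap.codRestrict (LinearMap.ker P) (LinearMap.id (R := ℝ) (M := Fin m → ℝ) - P) hψ0 with hψdef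
  have hψcoe : ∀ x, ((ψ x : Fin m → ℝ)) = x - P x := fun x => rfl
  have hψfix : ∀ x : ↥(LinearMap.ker P), ψ (x : Fin m → ℝ) = x := by
    intro x
    apply Subtype.ext
    rw [hψcoe, LinearMap.mem_ker.1 x.2, sub_zero]
  set Λ : Submodule ℤ ↥(LinearMap.ker P) :=
    { carrier := {x | (x : Fin m → ℝ) ∈ L}
      add_mem' := fun {a b} ha hb => by
        simpa using L.add_mem ha hb
      zero_mem' := by simpa using L.zero_mem
      smul_mem' := fun c x hx => by
        have : ((c • x : ↥(LinearMap.ker P)) : Fin m → ℝ) = c • (x : Fin m → ℝ) := rfl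
        simpa [this] using AddSubgroup.zsmul_mem L hx c } with hΛdef
  have hΛmem : ∀ x : ↥(LinearMap.ker P), x ∈ Λ ↔ (x : Fin m → ℝ) ∈ L := fun x => Iff.rfl
  have hψΛ : ∀ x ∈ L, ψ x ∈ Λ := by
    intro x hx
    rw [hΛmem, hψcoe]
    exact L.sub_mem hx (hVL _ (hPmemV x))
  haveI hdisc : DiscreteTopology ↥Λ := by
    rw [discreteTopology_iff_isOpen_singleton]
    intro a
    rw [Metric.isOpen_singleton_iff]
    refine ⟨ε₀, hε₀, fun b hb => ?_⟩
    have hdist : ‖((b : ↥(LinearMap.ker P)) : Fin m → ℝ) - ((a : ↥(LinearMap.ker P)) : Fin m → ℝ)‖ < ε₀ := by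
      have : dist b a = ‖((b : ↥(LinearMap.ker P)) : Fin m → ℝ) - ((a : ↥(LinearMap.ker P)) : Fin m → ℝ)‖ := by
        rw [Subtype.dist_eq, Subtype.dist_eq, dist_eq_norm]
      rwa [this] at hb
    have hmemL : ((b : ↥(LinearMap.ker P)) : Fin m → ℝ) - ((a : ↥(LinearMap.ker P)) : Fin m → ℝ) ∈ L :=
      L.sub_mem b.2 a.2
    have hker : ((b : ↥(LinearMap.ker P)) : Fin m → ℝ) - ((a : ↥(LinearMap.ker P)) : Fin m → ℝ)
        ∈ LinearMap.ker P := Submodule.sub_mem _ (b : ↥(LinearMap.ker P)).2 (a : ↥(LinearMap.ker P)).2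
    have := hkerV _ hker (hsmall _ hmemL hdist)
    apply Subtype.ext; apply Subtype.ext
    rw [sub_eq_zero] at this
    exact this

  -- basis vectors are integer vectors and lie in L
  set e : Basis (Fin m) ℝ (Fin m → ℝ) := Pi.basisFun ℝ (Fin m) with hedef
  have heInt : ∀ j, e j ∈ intVec m := by
    intro j i
    refine ⟨if i = j then 1 else 0, ?_⟩
    rw [hedef, Pi.basisFun_apply]
    by_cases h : i = j <;> simp [Pi.single_apply, h, eq_comm]
  have heL : ∀ j, e j ∈ L := fun j => hLi _ (heInt j)
  -- the images ψ (e j) span ker P over ℝ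
  have hψspan : span ℝ (Set.range fun j => ψ (e j)) = ⊤ := by
    apply top_unique
    intro z _
    have hz : z = ψ (z : Fin m → ℝ) := (hψfix z).symm
    have hzmem : (z : Fin m → ℝ) ∈ span ℝ (Set.range e) := by rw [e.span_eq]; trivial
    have : ψ (z : Fin m → ℝ) ∈ Submodule.map ψ (span ℝ (Set.range e)) :=
      Submodule.mem_map_of_mem hzmem
    rw [Submodule.map_span, ← Set.range_comp] at this
    rw [hz]
    exact this
  haveI hzlat : IsZLattice ℝ Λ := by
    constructor
    apply top_unique
    rw [← hψspan]
    apply span_le.2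
    rintro _ ⟨j, rfl⟩
    exact subset_span (hψΛ _ (heL j))
  have hrankΛ : finrank ℤ ↥Λ = finrank ℝ ↥(LinearMap.ker P) := ZLattice.rank ℝ Λ
  -- extract an ℝ-basis of ker P from the lattice vectors ψ (e j)
  obtain ⟨t, htsub, htspan, htli⟩ := exists_linearIndependent ℝ (Set.range fun j => ψ (e j))
  rw [hψspan] at htspan
  have htfin : t.Finite := (Set.finite_range _).subset htsub
  haveI htfintype : Fintype ↑t := htfin.fintype
  have htcard : t.toFinset.card = finrank ℝ ↥(LinearMap.ker P) := by
    have h1 := finrank_span_set_eq_card (s := t) htli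
    rw [htspan, finrank_top] at h1
    exact h1.symm
  have hjdx : ∀ τ : ↑t, ∃ j : Fin m, ψ (e j) = (τ : ↥(LinearMap.ker P)) := fun τ => htsub τ.2
  choose jdx hjdx_eq using hjdx
  have htΛ : ∀ τ : ↑t, (τ : ↥(LinearMap.ker P)) ∈ Λ := by
    intro τ
    rw [← hjdx_eq τ]
    exact hψΛ _ (heL _)
  -- Step C : divisibility modulo the lattice spanned by t
  have hdivis : ∀ lam : ↥(LinearMap.ker P), lam ∈ Λ →
      ∃ N : ℕ, 0 < N ∧ ((N : ℤ) • lam) ∈ span ℤ t := by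
    intro lam hlam
    by_contra hcon
    push_neg at hcon
    have hnot : ∀ c : ℤ, c ≠ 0 → ¬ (c • lam ∈ span ℤ t) := by
      intro c hc hmem
      rcases Int.natAbs_eq c with h | h
      · exact hcon c.natAbs (Int.natAbs_pos.2 hc) (by rwa [← h])
      · refine hcon c.natAbs (Int.natAbs_pos.2 hc) ?_
        have : ((c.natAbs : ℤ)) • lam = -(c • lam) := by
          rw [← neg_smul]
          congr 1
          omega
        rw [this]
        exact neg_mem hmem
    set w : Option ↑t → ↥Λ := fun o => Option.elim o ⟨lam, hlam⟩ (fun τ => ⟨(τ : _), htΛ τ⟩)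
      with hwdef
    have hwli : LinearIndependent ℤ w := by
      apply LinearIndependent.of_comp Λ.subtype
      rw [Fintype.linearIndependent_iff]
      intro g hg
      rw [Fintype.sum_option] at hg
      simp only [hwdef, Option.elim, Function.comp_apply, coe_subtype] at hg
      by_cases hg0 : g none = 0
      · rw [hg0, zero_smul, zero_add] at hg
        have htliZ : LinearIndependent ℤ (Subtype.val : ↑t → ↥(LinearMap.ker P)) := by
          apply htli.restrict_scalars
          intro a b hab
          simpa using hab
        have := (Fintype.linearIndependent_iff.1 htliZ) (fun τ => g (some τ)) hg
        intro o
        match o with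
        | none => exact hg0
        | some τ => exact this τ
      · exfalso
        apply hnot (g none) hg0
        rw [eq_neg_of_add_eq_zero_left hg]
        exact neg_mem (Submodule.sum_mem _ fun τ _ => Submodule.smul_mem _ _ (subset_span τ.2))
    haveI : Module.Finite ℤ ↥Λ := by infer_instance
    have hcardle := hwli.fintype_card_le_finrank
    rw [hrankΛ, ← htcard] at hcardle
    simp [Fintype.card_option, Set.toFinset_card] at hcardle

  -- Step D : V is spanned by its integer vectors
  have hkerψV : ∀ x : Fin m → ℝ, ψ x = 0 → x ∈ V := by
    intro x hx
    have h0 : x - P x = 0 := by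
      have := congrArg (Subtype.val) hx
      rwa [hψcoe] at this
    have hx2 : x = P x := by rwa [sub_eq_zero] at h0
    rw [hx2]; exact hPmemV x
  set W : Submodule ℝ (Fin m → ℝ) := span ℝ ((V : Set (Fin m → ℝ)) ∩ (intVec m : Set (Fin m → ℝ)))
    with hWdef
  have hWV : W ≤ V := span_le.2 (fun z hz => hz.1)
  set JJ : Submodule ℝ (Fin m → ℝ) := span ℝ (Set.range fun τ : ↑t => e (jdx τ)) with hJJdef
  have hvj : ∀ j : Fin m, ∃ N : ℕ, 0 < N ∧ ((N:ℝ) • e j) ∈ W ⊔ JJ := by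
    intro j
    obtain ⟨N, hN, hmem⟩ := hdivis _ (hψΛ _ (heL j))
    rw [mem_span_set'] at hmem
    obtain ⟨n, f, g, hsum⟩ := hmem
    refine ⟨N, hN, ?_⟩
    set vj : Fin m → ℝ := (N:ℤ) • e j - ∑ i, f i • e (jdx (g i)) with hvjdef
    have hψvj : ψ vj = 0 := by
      rw [hvjdef, map_sub, map_zsmul, map_sum]
      simp_rw [map_zsmul, hjdx_eq]
      rw [hsum, sub_self]
    have hVvj : vj ∈ V := hkerψV _ hψvj
    have hIntvj : vj ∈ intVec m := by
      refine Submodule.sub_mem _ (Submodule.smul_mem _ _ (heInt j)) ?_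
      exact Submodule.sum_mem _ fun i _ => Submodule.smul_mem _ _ (heInt _)
    have hcast1 : ((N:ℝ)) • e j = ((N:ℤ)) • e j := by
      rw [← Int.cast_smul_eq_zsmul ℝ]; norm_num
    have hrel : ((N:ℝ)) • e j = vj + ∑ i, ((f i : ℝ)) • e (jdx (g i)) := by
      rw [hcast1, hvjdef]
      simp_rw [Int.cast_smul_eq_zsmul ℝ]
      abel
    rw [hrel]
    refine Submodule.add_mem _ (Submodule.mem_sup_left (subset_span ⟨hVvj, hIntvj⟩)) ?_
    exact Submodule.sum_mem _ fun i _ => Submodule.mem_sup_right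
      (Submodule.smul_mem _ _ (subset_span ⟨g i, rfl⟩))
  have hespan : ∀ j, e j ∈ W ⊔ JJ := by
    intro j
    obtain ⟨N, hN, hmem⟩ := hvj j
    have hNne : (N:ℝ) ≠ 0 := Nat.cast_ne_zero.2 hN.ne'
    have := Submodule.smul_mem (W ⊔ JJ) ((N:ℝ)⁻¹) hmem
    rwa [inv_smul_smul₀ hNne] at this
  have htop : (⊤ : Submodule ℝ (Fin m → ℝ)) ≤ W ⊔ JJ := by
    rw [← e.span_eq]
    apply span_le.2
    rintro _ ⟨j, rfl⟩
    exact hespan j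
  have hrangeP : LinearMap.range P = V := by
    apply le_antisymm
    · rintro _ ⟨x, rfl⟩; exact hPmemV x
    · intro v hv; exact ⟨v, hPfix v hv⟩
  have hdim : finrank ℝ ↥V + finrank ℝ ↥(LinearMap.ker P) = m := by
    have hrn := LinearMap.finrank_range_add_finrank_ker P
    rw [hrangeP] at hrn
    rw [hrn, Module.finrank_pi, Fintype.card_fin]
  have hWge : finrank ℝ ↥V ≤ finrank ℝ ↥W := by
    have h1 : (m : ℕ) ≤ finrank ℝ ↥(W ⊔ JJ) := by
      have := Submodule.finrank_mono htop
      rwa [finrank_top, Module.finrank_pi, Fintype.card_fin] at this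
    have h2 : finrank ℝ ↥(W ⊔ JJ) + finrank ℝ ↥(W ⊓ JJ) =
        finrank ℝ ↥W + finrank ℝ ↥JJ := Submodule.finrank_sup_add_finrank_inf_eq W JJ
    have h3 : finrank ℝ ↥JJ ≤ finrank ℝ ↥(LinearMap.ker P) := by
      have hcard := finrank_span_le_card (R := ℝ) (Set.range fun τ : ↑t => e (jdx τ))
      have hc2 : (Set.range fun τ : ↑t => e (jdx τ)).toFinset.card ≤ t.toFinset.card := by
        rw [Set.toFinset_range]
        calc (Finset.univ.image fun τ : ↑t => e (jdx τ)).card ≤ Finset.univ.card :=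
              Finset.card_image_le
          _ = Fintype.card ↑t := rfl
          _ = t.toFinset.card := Set.toFinset_card t ▸ rfl
      rw [← hJJdef] at hcard
      omega
    omega
  have hVW : W = V := eq_of_le_of_finrank_le hWV hWge

  -- Step E : conclusion
  intro x hx ε hε
  obtain ⟨N, hN, hmem⟩ := hdivis _ (hψΛ _ hx)
  rw [mem_span_set'] at hmem
  obtain ⟨n, f, g, hsum⟩ := hmem
  set zint : Fin m → ℝ := ∑ i, f i • e (jdx (g i)) with hzintdef
  have hzint_int : zint ∈ intVec m :=
    Submodule.sum_mem _ fun i _ => Submodule.smul_mem _ _ (heInt _)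
  have hv0' : ((N:ℤ) • x - zint) ∈ V := by
    apply hkerψV
    rw [map_sub, map_zsmul, hzintdef, map_sum]
    simp_rw [map_zsmul, hjdx_eq]
    rw [hsum, sub_self]
  set v₀ : Fin m → ℝ := (N:ℝ)⁻¹ • ((N:ℤ) • x - zint) with hv₀def
  have hv₀V : v₀ ∈ V := Submodule.smul_mem _ _ hv0'
  have hNR : ((N:ℝ)) ≠ 0 := Nat.cast_ne_zero.2 hN.ne'
  have hxv₀ : x - v₀ = (N:ℝ)⁻¹ • zint := by
    rw [hv₀def, smul_sub, ← Int.cast_smul_eq_zsmul ℝ, smul_smul]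
    have hc : (N:ℝ)⁻¹ * ((N:ℤ):ℝ) = 1 := by
      push_cast
      field_simp
    rw [hc, one_smul]
    abel
  have hv₀W : v₀ ∈ span ℝ ((V : Set (Fin m → ℝ)) ∩ (intVec m : Set (Fin m → ℝ))) := by
    rw [← hWdef, hVW]
    exact hv₀V
  rw [mem_span_set'] at hv₀W
  obtain ⟨n2, f2, g2, hsum2⟩ := hv₀W
  set D : ℝ := (∑ i, ‖(g2 i : Fin m → ℝ)‖) + 1 with hDdef
  have hSnn : (0:ℝ) ≤ ∑ i, ‖(g2 i : Fin m → ℝ)‖ :=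
    Finset.sum_nonneg fun i _ => norm_nonneg _
  have hDpos : 0 < D := by rw [hDdef]; linarith
  have hδpos : 0 < ε / D := div_pos hε hDpos
  have hqex : ∀ i : Fin n2, ∃ q : ℚ, |f2 i - q| < ε / D := fun i => exists_rat_near _ hδpos
  choose q hq using hqex
  set wv : Fin m → ℝ := ∑ i, (q i : ℝ) • (g2 i : Fin m → ℝ) with hwvdef
  have hwvV : wv ∈ V := Submodule.sum_mem _ fun i _ => Submodule.smul_mem _ _ (g2 i).2.1
  have hdiff : ‖wv - v₀‖ < ε := by
    have hrw : wv - v₀ = ∑ i, ((q i : ℝ) - f2 i) • (g2 i : Fin m → ℝ) := by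
      rw [hwvdef, ← hsum2, ← Finset.sum_sub_distrib]
      simp_rw [sub_smul]
    rw [hrw]
    calc ‖∑ i, ((q i : ℝ) - f2 i) • (g2 i : Fin m → ℝ)‖
        ≤ ∑ i, ‖((q i : ℝ) - f2 i) • (g2 i : Fin m → ℝ)‖ := norm_sum_le _ _
      _ ≤ ∑ i, (ε / D) * ‖(g2 i : Fin m → ℝ)‖ := by
          apply Finset.sum_le_sum
          intro i _
          rw [norm_smul, Real.norm_eq_abs, abs_sub_comm]
          exact mul_le_mul_of_nonneg_right (hq i).le (norm_nonneg _)
      _ = (ε / D) * ∑ i, ‖(g2 i : Fin m → ℝ)‖ := (Finset.mul_sum _ _ _).symm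
      _ < (ε / D) * D := by
          apply mul_lt_mul_of_pos_left _ hδpos
          rw [hDdef]; linarith
      _ = ε := div_mul_cancel₀ ε hDpos.ne'
  refine ⟨x - v₀ + wv, ?_, ?_, ?_⟩
  · exact L.add_mem (L.sub_mem hx (hVL _ hv₀V)) (hVL _ hwvV)
  · -- rational coordinates
    intro i
    obtain ⟨z, hz⟩ := hzint_int i
    have hg2int : ∀ i2 : Fin n2, ∀ j, ∃ zz : ℤ, (g2 i2 : Fin m → ℝ) j = zz :=
      fun i2 => (g2 i2).2.2
    choose zz hzz using hg2int
    refine ⟨(z : ℚ) / (N : ℚ) + ∑ i2, q i2 * zz i2 i, ?_⟩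
    have h1 : (x - v₀ + wv) i = (N:ℝ)⁻¹ * (z:ℝ) + wv i := by
      rw [Pi.add_apply, hxv₀, Pi.smul_apply, smul_eq_mul, hz]
    have h2 : wv i = ∑ i2, (q i2 : ℝ) * ((zz i2 i : ℤ) : ℝ) := by
      rw [hwvdef]
      rw [Finset.sum_apply]
      congr 1
      funext i2
      rw [Pi.smul_apply, smul_eq_mul, hzz]
    rw [h1, h2]
    push_cast
    ring
  · have hy : x - v₀ + wv - x = wv - v₀ := by abel
    rw [hy]
    exact hdiff







/-- The quotient map from `ℝ^m` to the torus, as an additive group hom. -/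
noncomputable def torusMk (m : ℕ) : (Fin m → ℝ) →+ (Fin m → AddCircle (1:ℝ)) :=
  AddMonoidHom.mk' (fun a i => (a i : AddCircle (1:ℝ))) (by
    intro a b
    funext i
    exact AddCircle.coe_add (1:ℝ) (a i) (b i))

theorem torusMk_continuous (m : ℕ) : Continuous (torusMk m) :=
  continuous_pi fun i => (AddCircle.continuous_mk' (1:ℝ)).comp (continuous_apply i)

/-- Torsion points are dense in a closed subgroup of the torus. -/
theorem torsion_dense (m : ℕ) (Γ : AddSubgroup (Fin m → AddCircle (1:ℝ)))
    (hΓ : IsClosed (Γ : Set (Fin m → AddCircle (1:ℝ)))) (θ : Fin m → AddCircle (1:ℝ))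
    (hθ : θ ∈ Γ) (ε : ℝ) (hε : 0 < ε) :
    ∃ τ ∈ Γ, (∃ M : ℕ, 0 < M ∧ M • τ = 0) ∧ dist τ θ < ε := by
  classical
  set L : AddSubgroup (Fin m → ℝ) := AddSubgroup.comap (torusMk m) Γ with hLdef
  have hLc : IsClosed (L : Set (Fin m → ℝ)) := hΓ.preimage (torusMk_continuous m)
  have hLi : ∀ x ∈ intVec m, x ∈ L := by
    intro x hxi
    have hx0 : torusMk m x = 0 := by
      funext i
      obtain ⟨z, hz⟩ := hxi i
      show ((x i : ℝ) : AddCircle (1:ℝ)) = 0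
      rw [AddCircle.coe_eq_zero_iff]
      exact ⟨z, by simp [hz, zsmul_eq_mul]⟩
    show torusMk m x ∈ Γ
    rw [hx0]
    exact Γ.zero_mem
  -- lift θ
  have hlift : ∀ i, ∃ r : ℝ, (r : AddCircle (1:ℝ)) = θ i := fun i =>
    QuotientAddGroup.mk'_surjective _ (θ i)
  choose a ha using hlift
  have haL : a ∈ L := by
    show torusMk m a ∈ Γ
    have : torusMk m a = θ := funext fun i => ha i
    rwa [this]
  obtain ⟨y, hyL, hyQ, hyd⟩ := rat_dense L hLc hLi a haL ε hε
  refine ⟨torusMk m y, hyL, ?_, ?_⟩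
  · -- torsion
    choose q hq using hyQ
    set M : ℕ := ∏ i, (q i).den with hMdef
    have hMpos : 0 < M := Finset.prod_pos fun i _ => (q i).pos
    refine ⟨M, hMpos, ?_⟩
    funext i
    have hdvd : (q i).den ∣ M := Finset.dvd_prod_of_mem _ (Finset.mem_univ i)
    obtain ⟨c, hc⟩ := hdvd
    have hqM : ((M:ℚ)) * q i = ((q i).num * c : ℤ) := by
      rw [hc]
      push_cast
      rw [mul_comm ((q i).den : ℚ) (c:ℚ), mul_assoc, mul_comm ((q i).den:ℚ) (q i),
        Rat.mul_den_eq_num]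
      ring
    show M • ((y i : ℝ) : AddCircle (1:ℝ)) = 0
    rw [← AddCircle.coe_nsmul]
    rw [AddCircle.coe_eq_zero_iff]
    refine ⟨(q i).num * c, ?_⟩
    have : (M : ℝ) * (y i) = (((q i).num * c : ℤ) : ℝ) := by
      rw [hq i]
      have := congrArg (fun r : ℚ => (r : ℝ)) hqM
      push_cast at this ⊢
      linarith [this]
    simp [zsmul_eq_mul, nsmul_eq_mul, this]
  · -- distance
    have hle : dist (torusMk m y) θ ≤ ‖y - a‖ := by
      rw [dist_pi_le_iff (norm_nonneg _)]
      intro i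
      have h1 : dist (torusMk m y i) (θ i) = ‖((y i - a i : ℝ) : AddCircle (1:ℝ))‖ := by
        rw [← ha i]
        show dist ((y i : ℝ) : AddCircle (1:ℝ)) ((a i : ℝ) : AddCircle (1:ℝ)) = _
        rw [dist_eq_norm, AddCircle.coe_sub]
      rw [h1]
      calc ‖((y i - a i : ℝ) : AddCircle (1:ℝ))‖ ≤ ‖y i - a i‖ :=
            QuotientAddGroup.norm_mk_le_norm
        _ = ‖(y - a) i‖ := by rw [Pi.sub_apply]
        _ ≤ ‖y - a‖ := norm_le_pi_norm (y - a) i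
    exact lt_of_le_of_lt hle hyd

end ExpLiouvilleAux

/-- For a closed additive subgroup `Γ` of the torus `𝕋^m = (Fin m → AddCircle 1)`,
the set of exponentially Liouville elements of `Γ` is residual in `Γ`
(with its subspace topology/metric). -/
theorem exponentially_liouville_residual_closed_subgroup (m : ℕ)
    (Γ : AddSubgroup (Fin m → AddCircle (1 : ℝ))) (hΓ : IsClosed (Γ : Set (Fin m → AddCircle (1 : ℝ)))) :
    {θ : Γ | ∀ c : ℝ, 0 < c → ∃ k : ℕ, 0 < k ∧ dist (k • θ) 0 < Real.exp (-(c * k))} ∈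
      residual Γ := by
  classical
  set U : ℕ → Set ↥Γ := fun n =>
    {θ : ↥Γ | ∃ k : ℕ, 0 < k ∧ dist (k • θ) 0 < Real.exp (-(((n:ℝ)+1) * k))} with hU
  have hsub : (⋂ n, U n) ⊆
      {θ : ↥Γ | ∀ c : ℝ, 0 < c → ∃ k : ℕ, 0 < k ∧ dist (k • θ) 0 < Real.exp (-(c * k))} := by
    intro θ hθ c hc
    obtain ⟨n, hn⟩ := exists_nat_ge c
    obtain ⟨k, hk, hlt⟩ := Set.mem_iInter.1 hθ n
    refine ⟨k, hk, lt_of_lt_of_le hlt ?_⟩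
    apply Real.exp_le_exp.2
    have hck : c * k ≤ ((n:ℝ)+1) * k := by
      apply mul_le_mul_of_nonneg_right _ (Nat.cast_nonneg k)
      linarith
    linarith
  refine Filter.mem_of_superset ?_ hsub
  rw [countable_iInter_mem]
  intro n
  apply residual_of_dense_open
  · -- open
    have hUn : U n = ⋃ k : ℕ,
        {θ : ↥Γ | 0 < k ∧ dist (k • θ) 0 < Real.exp (-(((n:ℝ)+1) * k))} := by
      ext θ
      simp only [hU, Set.mem_setOf_eq, Set.mem_iUnion]
    rw [hUn]
    apply isOpen_iUnion
    intro k
    by_cases hk : 0 < k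
    · have : {θ : ↥Γ | 0 < k ∧ dist (k • θ) 0 < Real.exp (-(((n:ℝ)+1) * k))}
          = {θ : ↥Γ | dist (k • θ) 0 < Real.exp (-(((n:ℝ)+1) * k))} := by
        ext θ; simp [hk]
      rw [this]
      apply isOpen_lt _ continuous_const
      exact Continuous.dist (continuous_nsmul k) continuous_const
    · have : {θ : ↥Γ | 0 < k ∧ dist (k • θ) 0 < Real.exp (-(((n:ℝ)+1) * k))} = ∅ := by
        ext θ; simp [hk]
      rw [this]
      exact isOpen_empty
  · -- dense
    rw [Metric.dense_iff]
    intro θ r hr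
    obtain ⟨τ, hτΓ, ⟨M, hM, hM0⟩, hdist⟩ :=
      ExpLiouvilleAux.torsion_dense m Γ hΓ (θ : Fin m → AddCircle (1:ℝ)) θ.2 r hr
    refine ⟨⟨τ, hτΓ⟩, ?_, ?_⟩
    · rw [Metric.mem_ball, Subtype.dist_eq]
      exact hdist
    · refine ⟨M, hM, ?_⟩
      have hsm : M • (⟨τ, hτΓ⟩ : ↥Γ) = 0 := by
        apply Subtype.ext
        have hcoe : ((M • (⟨τ, hτΓ⟩ : ↥Γ) : ↥Γ) : Fin m → AddCircle (1:ℝ)) = M • τ := rfl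
        rw [hcoe, hM0]
        rfl
      rw [hsm]
      simp [Real.exp_pos]
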